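/- There exists a tree automaton showing that S(≡^up(≡^dw), id) is not good for saturation: adding a transition whose source is upward-trace-equivalent (parameterized by downward equivalence) to the source of an existing transition, with identical targets, can strictly enlarge the language. -/
import Mathlib


/-- Trees over an alphabet: a node label and a list of children. -/
inductive TTree (Sym : Type) : Type where
  | node : Sym → List (TTree Sym) → TTree Sym

/-- A top-down tree automaton: transitions and initial states. -/
structure TDTA (Q Sym : Type) where
  delta : Set (Q × Sym × List Q)
  init : Set Q

/-- `Accepts δ q t`: there is a run of the transition relation `δ` on the
closed tree `t` rooted at state `q` (leaf rules are transitions with empty target list). -/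
inductive Accepts {Q Sym : Type} (δ : Set (Q × Sym × List Q)) : Q → TTree Sym → Prop where
  | node {q : Q} {a : Sym} {qs : List Q} {ts : List (TTree Sym)}
      (hmem : (q, a, qs) ∈ δ) (hlen : qs.length = ts.length)
      (hchild : ∀ i : Fin qs.length, Accepts δ (qs.get i) (ts.get (Fin.cast hlen i))) :
      Accepts δ q (TTree.node a ts)

/-- The downward language of a state. -/
def Dlang {Q Sym : Type} (δ : Set (Q × Sym × List Q)) (q : Q) : Set (TTree Sym) :=
  {t | Accepts δ q t}

/-- The language of a tree automaton. -/
def Lang {Q Sym : Type} (A : TDTA Q Sym) : Set (TTree Sym) :=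
  {t | ∃ q ∈ A.init, Accepts A.delta q t}

/-- The `S`-saturated automaton: add every potential transition `t'` for which
some existing transition `t ∈ δ` satisfies `t' S t`. -/
def satAut {Q Sym : Type} (A : TDTA Q Sym)
    (S : Q × Sym × List Q → Q × Sym × List Q → Prop) : TDTA Q Sym :=
  ⟨{t' | ∃ t ∈ A.delta, S t' t}, A.init⟩

/-- The pruned automaton: keep only the transitions that are maximal w.r.t. `P`. -/
def pruneAut {Q Sym : Type} (A : TDTA Q Sym)
    (P : Q × Sym × List Q → Q × Sym × List Q → Prop) : TDTA Q Sym :=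
  ⟨{t | t ∈ A.delta ∧ ∀ t' ∈ A.delta, ¬ P t t'}, A.init⟩

/-- The quotient automaton by an equivalence (setoid) on states. -/
def quotAut {Q Sym : Type} (A : TDTA Q Sym) (s : Setoid Q) : TDTA (Quotient s) Sym :=
  ⟨{t | ∃ r ∈ A.delta, t = (Quotient.mk s r.1, r.2.1, r.2.2.map (Quotient.mk s))},
   {x | ∃ q ∈ A.init, x = Quotient.mk s q}⟩

/-- `Srel Rs Rt` compares two transitions over the same symbol:
sources by `Rs`, target tuples componentwise by `Rt`. -/
def Srel {Q Sym : Type} (Rs Rt : Q → Q → Prop) :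
    Q × Sym × List Q → Q × Sym × List Q → Prop :=
  fun t' t => t'.2.1 = t.2.1 ∧ Rs t'.1 t.1 ∧ List.Forall₂ Rt t'.2.2 t.2.2

/-- Runs with open leaves: trees over `Sym ⊕ Q`, where a leaf labelled by a state
`q` (a "hole") is read exactly at state `q`.  `AcceptsH δ q t` means there is such
a (partial) run of `δ` on `t` rooted at `q`. -/
inductive AcceptsH {Q Sym : Type} (δ : Set (Q × Sym × List Q)) :
    Q → TTree (Sym ⊕ Q) → Prop where
  | hole (q : Q) : AcceptsH δ q (TTree.node (Sum.inr q) [])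
  | node {q : Q} {a : Sym} {qs : List Q} {ts : List (TTree (Sym ⊕ Q))}
      (hmem : (q, a, qs) ∈ δ) (hlen : qs.length = ts.length)
      (hchild : ∀ i : Fin qs.length, AcceptsH δ (qs.get i) (ts.get (Fin.cast hlen i))) :
      AcceptsH δ q (TTree.node (Sum.inl a) ts)

/-- One-hole contexts over `Sym ⊕ Q`. -/
inductive Ctx (Q Sym : Type) : Type where
  | hole : Ctx Q Sym
  | node : Sym → List (TTree (Sym ⊕ Q)) → Ctx Q Sym → List (TTree (Sym ⊕ Q)) → Ctx Q Sym

/-- Filling the hole of a context with a tree. -/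
def fill {Q Sym : Type} : Ctx Q Sym → TTree (Sym ⊕ Q) → TTree (Sym ⊕ Q)
  | Ctx.hole, t => t
  | Ctx.node a l C r, t => TTree.node (Sum.inl a) (l ++ fill C t :: r)

/-- A state leaf. -/
def leafQ {Q Sym : Type} (q : Q) : TTree (Sym ⊕ Q) := TTree.node (Sum.inr q) []

/-- `TreeRel R` relates two trees with identical symbol structure whose state
leaves are componentwise related by `R`. -/
inductive TreeRel {Q Sym : Type} (R : Q → Q → Prop) :
    TTree (Sym ⊕ Q) → TTree (Sym ⊕ Q) → Prop where
  | leaf {p q : Q} : R p q →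
      TreeRel R (TTree.node (Sum.inr p) []) (TTree.node (Sum.inr q) [])
  | node {a : Sym} {ts ts' : List (TTree (Sym ⊕ Q))} (hlen : ts.length = ts'.length)
      (h : ∀ i : Fin ts.length, TreeRel R (ts.get i) (ts'.get (Fin.cast hlen i))) :
      TreeRel R (TTree.node (Sum.inl a) ts) (TTree.node (Sum.inl a) ts')

/-- `CtxRel R` relates two contexts with identical symbol structure whose side
branches are `TreeRel R`-related. -/
inductive CtxRel {Q Sym : Type} (R : Q → Q → Prop) : Ctx Q Sym → Ctx Q Sym → Prop where
  | hole : CtxRel R Ctx.hole Ctx.hole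
  | node {a : Sym} {l r l' r' : List (TTree (Sym ⊕ Q))} {C C' : Ctx Q Sym}
      (hl : List.Forall₂ (TreeRel R) l l') (hC : CtxRel R C C')
      (hr : List.Forall₂ (TreeRel R) r r') :
      CtxRel R (Ctx.node a l C r) (Ctx.node a l' C' r')

/-- A tree (with open state leaves) is accepted by the automaton. -/
def AccLangH {Q Sym : Type} (A : TDTA Q Sym) (t : TTree (Sym ⊕ Q)) : Prop :=
  ∃ i ∈ A.init, AcceptsH A.delta i t

/-- Upward trace inclusion parameterized by a relation `R` on side-branch states:
every accepting run placing `p` at the hole of a context can be replaced by an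
accepting run placing `q` at the hole of an `R`-related context. -/
def upLe {Q Sym : Type} (A : TDTA Q Sym) (R : Q → Q → Prop) (p q : Q) : Prop :=
  ∀ C : Ctx Q Sym, AccLangH A (fill C (leafQ p)) →
    ∃ C' : Ctx Q Sym, CtxRel R C C' ∧ AccLangH A (fill C' (leafQ q))

/-- Upward trace equivalence parameterized by `R`. -/
def upEq {Q Sym : Type} (A : TDTA Q Sym) (R : Q → Q → Prop) (p q : Q) : Prop :=
  upLe A R p q ∧ upLe A R q p

/-- Upward trace inclusion parameterized by identity: every accepting run using
`p` at an open leaf can be replaced by one using `q` there, agreeing with the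
original run on all other (open) leaves. -/
def upLeId {Q Sym : Type} (A : TDTA Q Sym) (p q : Q) : Prop :=
  ∀ C : Ctx Q Sym, AccLangH A (fill C (leafQ p)) → AccLangH A (fill C (leafQ q))


namespace Stmt12Aux

inductive St : Type where
  | i | p | q | r | q1 | p1 | s
deriving DecidableEq

inductive Sy : Type where
  | a | b
deriving DecidableEq

def d0 : Set (St × Sy × List St) :=
  {x | x = (St.i, Sy.a, [St.p, St.q]) ∨ x = (St.i, Sy.a, [St.r, St.q1]) ∨
       x = (St.i, Sy.a, [St.p1, St.s]) ∨ x = (St.r, Sy.b, []) ∨ x = (St.s, Sy.b, [])}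

def A0 : TDTA St Sy := ⟨d0, {St.i}⟩

/-- the b-leaf closed tree -/
def bT : TTree (Sy ⊕ St) := TTree.node (Sum.inl Sy.b) []

lemma list_len2 {α} {ts : List α} (h : ts.length = 2) : ∃ t1 t2, ts = [t1, t2] := by
  match ts, h with
  | [t1, t2], _ => exact ⟨t1, t2, rfl⟩

lemma mkRunH {δ : Set (St × Sy × List St)} {st : St} {a : Sy} {s1 s2 : St}
    {t1 t2 : TTree (Sy ⊕ St)} (hmem : (st, a, [s1, s2]) ∈ δ)
    (h1 : AcceptsH δ s1 t1) (h2 : AcceptsH δ s2 t2) :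
    AcceptsH δ st (TTree.node (Sum.inl a) [t1, t2]) := by
  refine AcceptsH.node hmem rfl ?_
  intro iv
  obtain ⟨n, hn⟩ := iv
  match n, hn with
  | 0, _ => exact h1
  | 1, _ => exact h2

lemma Dlang_empty (x : St) (hx : x = St.p ∨ x = St.q ∨ x = St.q1 ∨ x = St.p1) :
    Dlang d0 x = (∅ : Set (TTree Sy)) := by
  ext t
  simp only [Set.mem_empty_iff_false, iff_false]
  intro h
  cases h with
  | node hmem hlen hchild =>
    rcases hmem with h | h | h | h | h <;>
      rcases hx with rfl | rfl | rfl | rfl <;> simp_all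

lemma Dqq1 : Dlang d0 St.q = Dlang d0 St.q1 := by
  rw [Dlang_empty St.q (by tauto), Dlang_empty St.q1 (by tauto)]

lemma Dpp1 : Dlang d0 St.p = Dlang d0 St.p1 := by
  rw [Dlang_empty St.p (by tauto), Dlang_empty St.p1 (by tauto)]

lemma accH_leafy {x : St} (hx : x = St.p ∨ x = St.q ∨ x = St.q1 ∨ x = St.p1)
    {t : TTree (Sy ⊕ St)} (h : AcceptsH d0 x t) : t = leafQ x := by
  cases h with
  | hole => rfl
  | node hmem hlen hchild =>
    rcases hmem with h | h | h | h | h <;>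
      rcases hx with rfl | rfl | rfl | rfl <;> simp_all

lemma accH_b {x : St} (hx : x = St.r ∨ x = St.s)
    {t : TTree (Sy ⊕ St)} (h : AcceptsH d0 x t) : t = leafQ x ∨ t = bT := by
  cases h with
  | hole => exact Or.inl rfl
  | @node _ a qs ts hmem hlen hchild =>
    right
    rcases hx with rfl | rfl <;> rcases hmem with h | h | h | h | h <;> simp_all <;>
    · obtain ⟨rfl, rfl⟩ := h
      have hts : ts = [] := by simpa using hlen.symm
      simp [bT, hts]

lemma accH_i {t : TTree (Sy ⊕ St)} (h : AcceptsH d0 St.i t) :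
    t = leafQ St.i ∨ ∃ t1 t2, t = TTree.node (Sum.inl Sy.a) [t1, t2] ∧
      ((AcceptsH d0 St.p t1 ∧ AcceptsH d0 St.q t2) ∨
       (AcceptsH d0 St.r t1 ∧ AcceptsH d0 St.q1 t2) ∨
       (AcceptsH d0 St.p1 t1 ∧ AcceptsH d0 St.s t2)) := by
  cases h with
  | hole => exact Or.inl rfl
  | @node _ a qs ts hmem hlen hchild =>
    right
    rcases hmem with h | h | h | h | h <;> simp only [Prod.mk.injEq, true_and] at h <;>
      try simp_all
    all_goals {
      obtain ⟨rfl, rfl⟩ := h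
      obtain ⟨t1, t2, rfl⟩ := list_len2 (by simpa using hlen.symm : ts.length = 2)
      refine ⟨t1, t2, rfl, ?_⟩
      have h0 := hchild ⟨0, by norm_num⟩
      have h1 := hchild ⟨1, by norm_num⟩
      simp only [List.get] at h0 h1
      tauto }

lemma fill_eq_leaf {C : Ctx St Sy} {u : TTree (Sy ⊕ St)} {x : St}
    (h : fill C u = leafQ x) : C = Ctx.hole ∧ u = leafQ x := by
  cases C with
  | hole => exact ⟨rfl, h⟩
  | node a l C0 r => simp [fill, leafQ] at h

lemma fill_ne_b {C : Ctx St Sy} {x : St} : fill C (leafQ x) ≠ bT := by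
  cases C <;> simp [fill, leafQ, bT]

abbrev N (l : List (TTree (Sy ⊕ St))) (r : List (TTree (Sy ⊕ St))) : Ctx St Sy :=
  Ctx.node Sy.a l Ctx.hole r

/-- Master characterization of contexts appearing in accepted open runs. -/
lemma ctx_char {x : St} {C : Ctx St Sy} (h : AccLangH A0 (fill C (leafQ x))) :
    (x = St.i ∧ C = Ctx.hole) ∨
    (x = St.p ∧ C = N [] [leafQ St.q]) ∨
    (x = St.q ∧ C = N [leafQ St.p] []) ∨
    (x = St.r ∧ C = N [] [leafQ St.q1]) ∨
    (x = St.q1 ∧ (C = N [leafQ St.r] [] ∨ C = N [bT] [])) ∨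
    (x = St.p1 ∧ (C = N [] [leafQ St.s] ∨ C = N [] [bT])) ∨
    (x = St.s ∧ C = N [leafQ St.p1] []) := by
  obtain ⟨i0, hi0, hrun⟩ := h
  have hi : i0 = St.i := by simpa [A0] using hi0
  subst hi
  rcases accH_i hrun with heq | ⟨t1, t2, heq, hd⟩
  · obtain ⟨rfl, hu⟩ := fill_eq_leaf heq
    have : x = St.i := by simpa [leafQ] using hu
    exact Or.inl ⟨this, rfl⟩
  · cases C with
    | hole =>
      simp only [fill] at heq
      simp [leafQ] at heq
    | node a0 l C0 rr =>
      simp only [fill, TTree.node.injEq, Sum.inl.injEq] at heq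
      obtain ⟨rfl, hlist⟩ := heq
      match l, hlist with
      | [], hlist =>
        simp only [List.nil_append, List.cons.injEq] at hlist
        obtain ⟨h1, h2⟩ := hlist
        subst h1
        subst h2
        rcases hd with ⟨ha, hb⟩ | ⟨ha, hb⟩ | ⟨ha, hb⟩
        · obtain ⟨rfl, hx⟩ := fill_eq_leaf (accH_leafy (by tauto) ha)
          have hx : x = St.p := by simpa [leafQ] using hx
          have hb' := accH_leafy (by tauto) hb
          subst hb'
          exact Or.inr (Or.inl ⟨hx, rfl⟩)
        · rcases accH_b (by tauto) ha with ht | ht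
          · obtain ⟨rfl, hx⟩ := fill_eq_leaf ht
            have hx : x = St.r := by simpa [leafQ] using hx
            have hb' := accH_leafy (by tauto) hb
            subst hb'
            exact Or.inr (Or.inr (Or.inr (Or.inl ⟨hx, rfl⟩)))
          · exact absurd ht fill_ne_b
        · obtain ⟨rfl, hx⟩ := fill_eq_leaf (accH_leafy (by tauto) ha)
          have hx : x = St.p1 := by simpa [leafQ] using hx
          rcases accH_b (by tauto) hb with ht | ht <;> subst ht
          · exact Or.inr (Or.inr (Or.inr (Or.inr (Or.inr (Or.inl ⟨hx, Or.inl rfl⟩)))))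
          · exact Or.inr (Or.inr (Or.inr (Or.inr (Or.inr (Or.inl ⟨hx, Or.inr rfl⟩)))))
      | [w], hlist =>
        simp only [List.cons_append, List.nil_append, List.cons.injEq] at hlist
        obtain ⟨rfl, h2, h3⟩ := hlist
        subst h2
        subst h3
        rcases hd with ⟨ha, hb⟩ | ⟨ha, hb⟩ | ⟨ha, hb⟩
        · obtain ⟨rfl, hx⟩ := fill_eq_leaf (accH_leafy (by tauto) hb)
          have hx : x = St.q := by simpa [leafQ] using hx
          have ha' := accH_leafy (by tauto) ha
          subst ha'
          exact Or.inr (Or.inr (Or.inl ⟨hx, rfl⟩))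
        · obtain ⟨rfl, hx⟩ := fill_eq_leaf (accH_leafy (by tauto) hb)
          have hx : x = St.q1 := by simpa [leafQ] using hx
          rcases accH_b (by tauto) ha with ht | ht <;> subst ht
          · exact Or.inr (Or.inr (Or.inr (Or.inr (Or.inl ⟨hx, Or.inl rfl⟩))))
          · exact Or.inr (Or.inr (Or.inr (Or.inr (Or.inl ⟨hx, Or.inr rfl⟩))))
        · rcases accH_b (by tauto) hb with ht | ht
          · obtain ⟨rfl, hx⟩ := fill_eq_leaf ht
            have hx : x = St.s := by simpa [leafQ] using hx
            have ha' := accH_leafy (by tauto) ha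
            subst ha'
            exact Or.inr (Or.inr (Or.inr (Or.inr (Or.inr (Or.inr ⟨hx, rfl⟩)))))
          · exact absurd ht fill_ne_b
      | w1 :: w2 :: l', hlist =>
        have := congrArg List.length hlist
        simp at this

abbrev Rdw : St → St → Prop := fun x y => Dlang (A0.delta) x = Dlang (A0.delta) y

lemma accLangH_pair {s1 s2 : St} {t1 t2 : TTree (Sy ⊕ St)}
    (hmem : (St.i, Sy.a, [s1, s2]) ∈ d0)
    (h1 : AcceptsH d0 s1 t1) (h2 : AcceptsH d0 s2 t2) :
    AccLangH A0 (TTree.node (Sum.inl Sy.a) [t1, t2]) :=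
  ⟨St.i, by simp [A0], mkRunH hmem h1 h2⟩

lemma mem1 : (St.i, Sy.a, [St.p, St.q]) ∈ d0 := by simp [d0]
lemma mem2 : (St.i, Sy.a, [St.r, St.q1]) ∈ d0 := by simp [d0]
lemma mem3 : (St.i, Sy.a, [St.p1, St.s]) ∈ d0 := by simp [d0]
lemma mem4 : (St.r, Sy.b, []) ∈ d0 := by simp [d0]
lemma mem5 : (St.s, Sy.b, []) ∈ d0 := by simp [d0]

lemma upEq_ii : upEq A0 Rdw St.i St.i := by
  constructor <;>
  · intro C hC
    rcases ctx_char hC with ⟨_, rfl⟩ | h | h | h | h | h | h <;>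
      first
      | exact ⟨Ctx.hole, CtxRel.hole, ⟨St.i, by simp [A0], AcceptsH.hole St.i⟩⟩
      | simp at h

lemma upEq_pr : upEq A0 Rdw St.p St.r := by
  constructor
  · intro C hC
    rcases ctx_char hC with h | ⟨_, rfl⟩ | h | h | h | h | h <;> try simp at h
    exact ⟨N [] [leafQ St.q1],
      CtxRel.node List.Forall₂.nil CtxRel.hole
        (List.Forall₂.cons (TreeRel.leaf Dqq1) List.Forall₂.nil),
      accLangH_pair mem2 (AcceptsH.hole St.r) (AcceptsH.hole St.q1)⟩
  · intro C hC
    rcases ctx_char hC with h | h | h | ⟨_, rfl⟩ | h | h | h <;> try simp at h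
    exact ⟨N [] [leafQ St.q],
      CtxRel.node List.Forall₂.nil CtxRel.hole
        (List.Forall₂.cons (TreeRel.leaf Dqq1.symm) List.Forall₂.nil),
      accLangH_pair mem1 (AcceptsH.hole St.p) (AcceptsH.hole St.q)⟩

lemma upEq_qs : upEq A0 Rdw St.q St.s := by
  constructor
  · intro C hC
    rcases ctx_char hC with h | h | ⟨_, rfl⟩ | h | h | h | h <;> try simp at h
    exact ⟨N [leafQ St.p1] [],
      CtxRel.node (List.Forall₂.cons (TreeRel.leaf Dpp1) List.Forall₂.nil)
        CtxRel.hole List.Forall₂.nil,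
      accLangH_pair mem3 (AcceptsH.hole St.p1) (AcceptsH.hole St.s)⟩
  · intro C hC
    rcases ctx_char hC with h | h | h | h | h | h | ⟨_, rfl⟩ <;> try simp at h
    exact ⟨N [leafQ St.p] [],
      CtxRel.node (List.Forall₂.cons (TreeRel.leaf Dpp1.symm) List.Forall₂.nil)
        CtxRel.hole List.Forall₂.nil,
      accLangH_pair mem1 (AcceptsH.hole St.p) (AcceptsH.hole St.q)⟩

/-- closed-run builders -/
lemma mkRun2 {δ : Set (St × Sy × List St)} {st : St} {a : Sy} {s1 s2 : St}
    {t1 t2 : TTree Sy} (hmem : (st, a, [s1, s2]) ∈ δ)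
    (h1 : Accepts δ s1 t1) (h2 : Accepts δ s2 t2) :
    Accepts δ st (TTree.node a [t1, t2]) := by
  refine Accepts.node hmem rfl ?_
  intro iv
  obtain ⟨n, hn⟩ := iv
  match n, hn with
  | 0, _ => exact h1
  | 1, _ => exact h2

lemma mkRun0 {δ : Set (St × Sy × List St)} {st : St} {a : Sy}
    (hmem : (st, a, []) ∈ δ) : Accepts δ st (TTree.node a []) := by
  refine Accepts.node hmem rfl ?_
  intro iv
  exact absurd iv.isLt (by simp)

end Stmt12Aux

/-- `S(≡up(≡dw), id)` is not GFS: there is an automaton where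
adding a transition whose source is upward-trace equivalent (parameterized by
downward equivalence) to the source of an existing transition, with identical
targets, strictly enlarges the language. -/
theorem stmt12 :
    ∃ (Q Sym : Type) (A : TDTA Q Sym),
      Lang (satAut A
        (Srel (fun p q => upEq A (fun x y => Dlang A.delta x = Dlang A.delta y) p q)
              (Eq : Q → Q → Prop))) ≠ Lang A := by
  classical
  refine ⟨Stmt12Aux.St, Stmt12Aux.Sy, Stmt12Aux.A0, ?_⟩
  open Stmt12Aux in
  intro heq
  set S := Srel (fun p q => upEq A0 (fun x y => Dlang A0.delta x = Dlang A0.delta y) p q)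
    (Eq : St → St → Prop) with hS
  have hmem1' : (St.i, Sy.a, [St.p, St.q]) ∈ (satAut A0 S).delta := by
    refine ⟨(St.i, Sy.a, [St.p, St.q]), mem1, rfl, upEq_ii, ?_⟩
    exact List.Forall₂.cons rfl (List.Forall₂.cons rfl List.Forall₂.nil)
  have hmemp : (St.p, Sy.b, []) ∈ (satAut A0 S).delta :=
    ⟨(St.r, Sy.b, []), mem4, rfl, upEq_pr, List.Forall₂.nil⟩
  have hmemq : (St.q, Sy.b, []) ∈ (satAut A0 S).delta :=
    ⟨(St.s, Sy.b, []), mem5, rfl, upEq_qs, List.Forall₂.nil⟩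
  have hT : TTree.node Sy.a [TTree.node Sy.b [], TTree.node Sy.b []] ∈
      Lang (satAut A0 S) := by
    exact ⟨St.i, by simp [satAut, A0], mkRun2 hmem1' (mkRun0 hmemp) (mkRun0 hmemq)⟩
  rw [heq] at hT
  obtain ⟨i0, hi0, hacc⟩ := hT
  have hi : i0 = St.i := by simpa [A0] using hi0
  subst hi
  cases hacc with
  | @node _ a qs ts hmem hlen hchild =>
    rcases hmem with h | h | h | h | h <;> simp only [Prod.mk.injEq, true_and] at h <;>
      try simp_all
    · obtain ⟨rfl, rfl⟩ := h
      have h0 := hchild ⟨0, by norm_num⟩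
      simp only [List.get] at h0
      have := Dlang_empty St.p (by tauto)
      exact absurd h0 (by intro hc; exact Set.eq_empty_iff_forall_notMem.mp this _ hc)
    · obtain ⟨rfl, rfl⟩ := h
      have h1 := hchild ⟨1, by norm_num⟩
      simp only [List.get] at h1
      have := Dlang_empty St.q1 (by tauto)
      exact absurd h1 (by intro hc; exact Set.eq_empty_iff_forall_notMem.mp this _ hc)
    · obtain ⟨rfl, rfl⟩ := h
      have h0 := hchild ⟨0, by norm_num⟩
      simp only [List.get] at h0
      have := Dlang_empty St.p1 (by tauto)
      exact absurd h0 (by intro hc; exact Set.eq_empty_iff_forall_notMem.mp this _ hc)
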